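/- Right intersection for δ-separation: for any directed graph G = (V,E) and any subsets A, B, C ⊆ V, if C δ-separates A from B in G (A ir_δ B | C) and B δ-separates A from C in G (A ir_δ C | B), then B ∩ C δ-separates A from B ∪ C in G (A ir_δ (B ∪ C) | B ∩ C). -/

import Mathlib

open Set

variable {V : Type*}

/-- There is a directed path (a sequence of ≥ 2 distinct vertices joined by
directed edges) from `v` to `w`; i.e. `v` is an ancestor of `w`. -/
def DirPathConn (E : V → V → Prop) (v w : V) : Prop :=
  ∃ l : List V, l.Chain' E ∧ l.Nodup ∧ 2 ≤ l.length ∧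
    l.head? = some v ∧ l.getLast? = some w

/-- `an(A)`: vertices outside `A` that are ancestors of some element of `A`. -/
def anSet (E : V → V → Prop) (A : Set V) : Set V :=
  {v | v ∉ A ∧ ∃ a ∈ A, DirPathConn E v a}

/-- `An(A) = A ∪ an(A)`, the smallest ancestral set containing `A`. -/
def AnSet (E : V → V → Prop) (A : Set V) : Set V := A ∪ anSet E A

/-- `pa(A)`: parents of `A` outside of `A`. -/
def paSet (E : V → V → Prop) (A : Set V) : Set V :=
  {v | v ∉ A ∧ ∃ a ∈ A, E v a}

/-- `cl(A) = A ∪ pa(A)`, the closure of `A`. -/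
def clSet (E : V → V → Prop) (A : Set V) : Set V := A ∪ paSet E A

/-- The induced subgraph `G_A` (as an edge relation on `V` supported on `A`). -/
def inducedGraph (E : V → V → Prop) (A : Set V) : V → V → Prop :=
  fun j k => E j k ∧ j ∈ A ∧ k ∈ A

/-- `G^B`: delete from `G` every directed edge starting in `B`. -/
def delOut (E : V → V → Prop) (B : Set V) : V → V → Prop :=
  fun j k => E j k ∧ j ∉ B

/-- The moral graph `G^m`: distinct `j, k` are adjacent iff they are joined by
an edge in some direction or have a common child. -/
def moralGraph (E : V → V → Prop) : V → V → Prop :=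
  fun j k => j ≠ k ∧ (E j k ∨ E k j ∨ ∃ c, E j c ∧ E k c)

/-- `l` is an undirected path from `v` to `w` in the undirected graph `H`:
a sequence of ≥ 2 distinct vertices, consecutive ones adjacent. -/
def IsUPath (H : V → V → Prop) (l : List V) (v w : V) : Prop :=
  l.Chain' H ∧ l.Nodup ∧ 2 ≤ l.length ∧
    l.head? = some v ∧ l.getLast? = some w

/-- `A ⊥_g B | C` in the undirected graph `H`: every path from a vertex of `A`
to a vertex of `B` contains a vertex of `C`. -/
def uSep (H : V → V → Prop) (A B C : Set V) : Prop :=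
  ∀ v ∈ A, ∀ w ∈ B, ∀ l : List V, IsUPath H l v w → ∃ c ∈ C, c ∈ l

/-- δ-separation for pairwise disjoint `A, B, C`: `A ⊥_g B | C` in the moral
graph of the subgraph of `G^B` induced by `An(A ∪ B ∪ C)`. -/
def deltaSepDisjoint (E : V → V → Prop) (A B C : Set V) : Prop :=
  uSep (moralGraph (inducedGraph (delOut E B) (AnSet E (A ∪ B ∪ C)))) A B C

/-- δ-separation `A ir_δ B | C` for general (not necessarily disjoint) sets:
`C \ B` δ-separates `A \ (B ∪ C)` from `B`. -/
def deltaSep (E : V → V → Prop) (A B C : Set V) : Prop :=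
  deltaSepDisjoint E (A \ (B ∪ C)) B (C \ B)

private lemma moralGraph_mono {E E' : V → V → Prop} (h : ∀ a b, E a b → E' a b) :
    ∀ a b, moralGraph E a b → moralGraph E' a b := by
  rintro a b ⟨hne, hab⟩
  refine ⟨hne, ?_⟩
  rcases hab with h1 | h1 | ⟨c, h1, h2⟩
  · exact Or.inl (h _ _ h1)
  · exact Or.inr (Or.inl (h _ _ h1))
  · exact Or.inr (Or.inr ⟨c, h _ _ h1, h _ _ h2⟩)

private lemma isUPath_mono {H H' : V → V → Prop} (h : ∀ a b, H a b → H' a b)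
    {l : List V} {v w : V} (hl : IsUPath H l v w) : IsUPath H' l v w :=
  ⟨hl.1.imp (fun {a b} hab => h a b hab), hl.2.1, hl.2.2.1, hl.2.2.2.1, hl.2.2.2.2⟩

private lemma mem_of_getLast?_eq {l : List V} {a : V} (h : l.getLast? = some a) : a ∈ l := by
  cases l with
  | nil => simp at h
  | cons b t =>
      rw [List.getLast?_eq_getLast (l := b :: t) (by simp)] at h
      have := List.getLast_mem (l := b :: t) (by simp)
      rwa [Option.some_inj.mp h] at this

private lemma dropWhile_head_false {p : V → Bool} :
    ∀ {l l' : List V} {a : V}, l.dropWhile p = a :: l' → p a = false := by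
  intro l
  induction l with
  | nil => intro l' a h; simp [List.dropWhile] at h
  | cons b t ih =>
      intro l' a h
      rw [List.dropWhile_cons] at h
      by_cases hb : p b = true
      · rw [if_pos hb] at h; exact ih h
      · rw [if_neg hb] at h
        rw [← (List.cons.injEq ..).mp h |>.1]
        simpa using hb

/-- Right intersection for δ-separation. -/
theorem deltaSep_right_intersection [Fintype V] (E : V → V → Prop)
    (hE : ∀ j k, E j k → j ≠ k) (A B C : Set V)
    (h1 : deltaSep E A B C) (h2 : deltaSep E A C B) :
    deltaSep E A (B ∪ C) (B ∩ C) := by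
  classical
  unfold deltaSep deltaSepDisjoint at h1 h2 ⊢
  have hS : A \ (B ∪ C ∪ B ∩ C) ∪ (B ∪ C) ∪ (B ∩ C) \ (B ∪ C)
      = A \ (B ∪ C) ∪ B ∪ C := by ext x; simp; tauto
  have hS1 : A \ (B ∪ C) ∪ B ∪ C \ B = A \ (B ∪ C) ∪ B ∪ C := by ext x; simp; tauto
  have hS2 : A \ (C ∪ B) ∪ C ∪ B \ C = A \ (B ∪ C) ∪ B ∪ C := by ext x; simp; tauto
  have hA : A \ (B ∪ C ∪ B ∩ C) = A \ (B ∪ C) := by ext x; simp; tauto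
  have hA2 : A \ (C ∪ B) = A \ (B ∪ C) := by rw [Set.union_comm]
  rw [hS1] at h1
  rw [hS2, hA2] at h2
  rw [hS, hA]
  set S := AnSet E (A \ (B ∪ C) ∪ B ∪ C) with hSdef
  intro v hv w hw l hl
  exfalso
  -- truncate the path at the first vertex in B ∪ C
  set p : V → Bool := fun x => decide (x ∉ B ∪ C) with hp
  have hpt : ∀ x, p x = true ↔ x ∉ B ∪ C := by intro x; simp [hp]
  have htd : l.takeWhile p ++ l.dropWhile p = l := List.takeWhile_append_dropWhile ..
  have hwmem : w ∈ l := mem_of_getLast?_eq hl.2.2.2.2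
  have hdne : l.dropWhile p ≠ [] := by
    intro h
    rw [h, List.append_nil] at htd
    have : p w = true := List.mem_takeWhile_imp (htd ▸ hwmem)
    exact ((hpt w).mp this) hw
  obtain ⟨w', d', hd⟩ := List.exists_cons_of_ne_nil hdne
  have hw' : w' ∈ B ∪ C := by
    have := dropWhile_head_false hd
    by_contra hcon
    rw [(hpt w').mpr hcon] at this; simp at this
  rw [hd] at htd
  set t := l.takeWhile p with htdef
  have htne : t ≠ [] := by
    intro h
    rw [h, List.nil_append] at htd
    have : l.head? = some w' := by rw [← htd]; rfl
    rw [hl.2.2.2.1] at this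
    exact hv.2 (Option.some_inj.mp this ▸ hw')
  have hsplit : l = (t ++ [w']) ++ d' := by rw [← htd]; simp
  -- the truncated path
  have hchain : (t ++ [w']).Chain' (moralGraph (inducedGraph (delOut E (B ∪ C)) S)) := by
    have := hl.1; rw [hsplit] at this
    exact (List.isChain_append.mp this).1
  have hnodup : (t ++ [w']).Nodup := by
    have := hl.2.1; rw [hsplit] at this
    exact this.sublist (List.sublist_append_left _ _)
  have hlen : 2 ≤ (t ++ [w']).length := by
    have : 1 ≤ t.length := List.length_pos_iff.mpr htne
    simp only [List.length_append, List.length_cons, List.length_nil]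
    omega
  have hhead : (t ++ [w']).head? = some v := by
    rw [List.head?_append_of_ne_nil _ htne, ← hl.2.2.2.1, hsplit,
      List.append_assoc, List.head?_append_of_ne_nil _ htne]
  have hlast : (t ++ [w']).getLast? = some w' := List.getLast?_concat
  have hupath : IsUPath (moralGraph (inducedGraph (delOut E (B ∪ C)) S)) (t ++ [w']) v w' :=
    ⟨hchain, hnodup, hlen, hhead, hlast⟩
  have hmemt : ∀ x ∈ t, x ∉ B ∪ C := fun x hx => (hpt x).mp (List.mem_takeWhile_imp hx)
  rcases hw' with hw'B | hw'C
  · -- use h1 with the path viewed in G^B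
    have hmono : ∀ a b, moralGraph (inducedGraph (delOut E (B ∪ C)) S) a b →
        moralGraph (inducedGraph (delOut E B) S) a b := by
      apply moralGraph_mono
      rintro a b ⟨⟨hab, ha⟩, h3, h4⟩
      exact ⟨⟨hab, fun h => ha (Or.inl h)⟩, h3, h4⟩
    obtain ⟨c, hc, hcl⟩ := h1 v hv w' hw'B (t ++ [w']) (isUPath_mono hmono hupath)
    rcases List.mem_append.mp hcl with hct | hcw
    · exact hmemt c hct (Or.inr hc.1)
    · simp only [List.mem_singleton] at hcw
      exact hc.2 (hcw ▸ hw'B)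
  · -- use h2 with the path viewed in G^C
    have hmono : ∀ a b, moralGraph (inducedGraph (delOut E (B ∪ C)) S) a b →
        moralGraph (inducedGraph (delOut E C) S) a b := by
      apply moralGraph_mono
      rintro a b ⟨⟨hab, ha⟩, h3, h4⟩
      exact ⟨⟨hab, fun h => ha (Or.inr h)⟩, h3, h4⟩
    obtain ⟨c, hc, hcl⟩ := h2 v hv w' hw'C (t ++ [w']) (isUPath_mono hmono hupath)
    rcases List.mem_append.mp hcl with hct | hcw
    · exact hmemt c hct (Or.inl hc.1)
    · simp only [List.mem_singleton] at hcw
      exact hc.2 (hcw ▸ hw'C)
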